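/- Let f = h + conj(g) where h(z) = Σ a_k z^k and g(z) = Σ b_k z^k are holomorphic on the unit disk with Σ(|a_k|² + |b_k|²) < ∞. Then ∫₀¹ (max_{|z| = r} |f(z)|)² dr ≤ 2π Σ_{n=0}^∞ (|a_n|² + |b_n|²). -/

import Mathlib

open Complex Metric intervalIntegral
open scoped Real

section Aux

open Real Set MeasureTheory


private lemma arctan_lower (s : ℝ) (hs : 0 ≤ s) : s / (1 + s ^ 2) ≤ Real.arctan s := by
  have key : ∀ x : ℝ, HasDerivAt (fun t => Real.arctan t - t / (1 + t ^ 2))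
      (2 * x ^ 2 / (1 + x ^ 2) ^ 2) x := by
    intro x
    have hden : (1 + x ^ 2) ≠ 0 := by positivity
    have h1 : HasDerivAt Real.arctan (1 / (1 + x ^ 2)) x := Real.hasDerivAt_arctan x
    have h2 : HasDerivAt (fun t : ℝ => 1 + t ^ 2) (2 * x) x := by
      simpa using ((hasDerivAt_pow 2 x).const_add 1)
    have h3 : HasDerivAt (fun t : ℝ => t / (1 + t ^ 2))
        ((1 * (1 + x ^ 2) - x * (2 * x)) / (1 + x ^ 2) ^ 2) x :=
      (hasDerivAt_id x).div h2 hden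
    have := h1.sub h3
    refine this.congr_deriv ?_
    field_simp
    ring
  have hmono : Monotone (fun t => Real.arctan t - t / (1 + t ^ 2)) := by
    apply monotone_of_deriv_nonneg
    · exact fun x => (key x).differentiableAt
    · intro x
      rw [(key x).deriv]
      positivity
  have h0 : (fun t => Real.arctan t - t / (1 + t ^ 2)) 0 = 0 := by simp
  have := hmono hs
  rw [h0] at this
  linarith


private lemma key_K (j N : ℕ) :
    ∑ k ∈ Finset.range N,
      Real.sqrt (2 * (j:ℝ) + 1) / (Real.sqrt (2 * (k:ℝ) + 1) * ((j:ℝ) + k + 1)) ≤ π := by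
  set M : ℝ := 2 * (j:ℝ) + 1 with hM
  have hMpos : 0 < M := by positivity
  have hsM : 0 < Real.sqrt M := Real.sqrt_pos.2 hMpos
  set f : ℝ → ℝ := fun x => Real.sqrt M / (Real.sqrt (2 * x + 1) * ((j:ℝ) + x + 1)) with hfdef
  set A : ℝ → ℝ := fun x => 2 * Real.arctan (Real.sqrt ((2 * x + 1) / M)) with hAdef
  have hderiv : ∀ x : ℝ, 0 ≤ x → HasDerivAt A (f x) x := by
    intro x hx
    have h2x : (0:ℝ) < 2 * x + 1 := by linarith
    have hu : HasDerivAt (fun t : ℝ => (2 * t + 1) / M) (2 / M) x := by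
      simpa using (((hasDerivAt_id x).const_mul 2).add_const 1).div_const M
    have hux : (0:ℝ) < (2 * x + 1) / M := by positivity
    have hsq : HasDerivAt (fun t : ℝ => Real.sqrt ((2 * t + 1) / M))
        (2 / M / (2 * Real.sqrt ((2 * x + 1) / M))) x := hu.sqrt hux.ne'
    have harc := (hsq.arctan).const_mul 2
    refine harc.congr_deriv ?_
    have hs2x : 0 < Real.sqrt (2 * x + 1) := Real.sqrt_pos.2 h2x
    rw [Real.sqrt_div h2x.le M]
    have hMsq : Real.sqrt M ^ 2 = M := Real.sq_sqrt hMpos.le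
    have hqsq : Real.sqrt (2*x+1) ^ 2 = 2*x+1 := Real.sq_sqrt h2x.le
    have hjx : (0:ℝ) < (j:ℝ) + x + 1 := by positivity
    rw [div_pow, hqsq, hMsq]
    have e2 : 1 + (2*x+1)/M = (2*((j:ℝ)+x+1))/M := by
      rw [hM]; field_simp; ring
    rw [e2, hfdef]
    field_simp
  have hfpos : ∀ x : ℝ, 0 ≤ x → 0 ≤ f x := by
    intro x hx; rw [hfdef]; dsimp only; positivity
  have hanti : ∀ x y : ℝ, 0 ≤ x → x ≤ y → f y ≤ f x := by
    intro x y hx hxy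
    rw [hfdef]; dsimp only
    have h1 : (0:ℝ) < Real.sqrt (2*x+1) * ((j:ℝ)+x+1) := by positivity
    apply div_le_div_of_nonneg_left hsM.le h1
    have h2 : Real.sqrt (2*x+1) ≤ Real.sqrt (2*y+1) := Real.sqrt_le_sqrt (by linarith)
    have h3 : (0:ℝ) ≤ Real.sqrt (2*x+1) := Real.sqrt_nonneg _
    apply mul_le_mul h2 (by linarith) (by positivity) (Real.sqrt_nonneg _)
  have hstep : ∀ k : ℕ, f ((k:ℝ) + 1) ≤ A ((k:ℝ) + 1) - A (k:ℝ) := by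
    intro k
    have hk0 : (0:ℝ) ≤ (k:ℝ) := Nat.cast_nonneg k
    have hcont : ContinuousOn f (Set.Icc (k:ℝ) ((k:ℝ)+1)) := by
      rw [hfdef]
      apply ContinuousOn.div continuousOn_const
      · exact ((Real.continuous_sqrt.comp (by continuity)).continuousOn).mul (by fun_prop)
      · intro x hx
        have hx0 : (0:ℝ) ≤ x := le_trans hk0 hx.1
        positivity
    have hii : IntervalIntegrable f MeasureTheory.volume (k:ℝ) ((k:ℝ)+1) :=
      hcont.intervalIntegrable_of_Icc (by linarith)
    have hftc : ∫ x in (k:ℝ)..((k:ℝ)+1), f x = A ((k:ℝ)+1) - A (k:ℝ) := by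
      apply intervalIntegral.integral_eq_sub_of_hasDerivAt
      · intro x hx
        rw [Set.uIcc_of_le (by linarith : (k:ℝ) ≤ (k:ℝ)+1)] at hx
        exact hderiv x (le_trans hk0 hx.1)
      · exact hii
    have hmono : ∫ _x in (k:ℝ)..((k:ℝ)+1), f ((k:ℝ)+1) ≤ ∫ x in (k:ℝ)..((k:ℝ)+1), f x := by
      apply intervalIntegral.integral_mono_on (by linarith) intervalIntegrable_const hii
      intro x hx
      exact hanti x ((k:ℝ)+1) (le_trans hk0 hx.1) hx.2
    rw [intervalIntegral.integral_const] at hmono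
    simp only [add_sub_cancel_left, one_smul] at hmono
    linarith [hftc ▸ hmono]
  have hAle : ∀ x : ℝ, A x ≤ π := by
    intro x
    rw [hAdef]; dsimp only
    have := Real.arctan_lt_pi_div_two (Real.sqrt ((2*x+1)/M))
    linarith
  have hA0 : f 0 ≤ A 0 := by
    have hs : (0:ℝ) ≤ 1 / Real.sqrt M := by positivity
    have harc := arctan_lower (1 / Real.sqrt M) hs
    have hMsq : Real.sqrt M ^ 2 = M := Real.sq_sqrt hMpos.le
    have hA0e : A 0 = 2 * Real.arctan (1 / Real.sqrt M) := by
      rw [hAdef]; dsimp only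
      congr 1
      rw [show (2*(0:ℝ)+1)/M = M⁻¹ by norm_num, Real.sqrt_inv, one_div]
    have hf0e : f 0 = 2 * ((1/Real.sqrt M) / (1 + (1/Real.sqrt M)^2)) := by
      rw [hfdef]; dsimp only
      norm_num [Real.sqrt_one]
      have h2j : 2*((j:ℝ)+1) = M + 1 := by rw [hM]; ring
      field_simp
      nlinarith [hMsq, h2j, hsM]
    rw [hA0e, hf0e]
    linarith [harc]
  have hkey : ∀ n : ℕ, ∑ k ∈ Finset.range (n+1), f (k:ℝ) ≤ f 0 + (A (n:ℝ) - A 0) := by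
    intro n
    induction n with
    | zero => simp
    | succ m ih =>
      rw [Finset.sum_range_succ]
      have h1 := hstep m
      push_cast
      push_cast at ih h1
      linarith
  have hsum_le : ∀ n : ℕ, ∑ k ∈ Finset.range n, f (k:ℝ) ≤ π := by
    intro n
    have hle : ∑ k ∈ Finset.range n, f (k:ℝ) ≤ ∑ k ∈ Finset.range (n+1), f (k:ℝ) := by
      rw [Finset.sum_range_succ]
      linarith [hfpos (n:ℝ) (Nat.cast_nonneg n)]
    calc ∑ k ∈ Finset.range n, f (k:ℝ) ≤ f 0 + (A (n:ℝ) - A 0) := le_trans hle (hkey n)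
      _ ≤ π := by linarith [hA0, hAle (n:ℝ)]
  simpa [hfdef] using hsum_le N

private lemma hilbert_finite (c : ℕ → ℝ) (hc : ∀ k, 0 ≤ c k) (N : ℕ) :
    ∑ j ∈ Finset.range N, ∑ k ∈ Finset.range N, c j * c k / ((j:ℝ) + k + 1)
      ≤ π * ∑ k ∈ Finset.range N, c k ^ 2 := by
  set p : ℕ → ℝ := fun j => Real.sqrt (2 * (j:ℝ) + 1) with hp
  have hppos : ∀ j : ℕ, 0 < p j := fun j => Real.sqrt_pos.2 (by positivity)
  have key : ∀ j k : ℕ, c j * c k / ((j:ℝ) + k + 1) ≤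
      (c j ^ 2 * (p j / p k) / (2 * ((j:ℝ) + k + 1))
        + c k ^ 2 * (p k / p j) / (2 * ((j:ℝ) + k + 1))) := by
    intro j k
    have hw : (0:ℝ) < (j:ℝ) + k + 1 := by positivity
    have hpj := hppos j
    have hpk := hppos k
    have e1 : c j ^ 2 * (p j / p k) + c k ^ 2 * (p k / p j)
        = ((c j * p j) ^ 2 + (c k * p k) ^ 2) / (p j * p k) := by
      field_simp
    have h2 : 2 * (c j * c k) ≤ c j ^ 2 * (p j / p k) + c k ^ 2 * (p k / p j) := by
      rw [e1, le_div_iff₀ (by positivity)]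
      nlinarith [sq_nonneg (c j * p j - c k * p k)]
    rw [← add_div, div_le_div_iff₀ hw (by positivity)]
    nlinarith [h2, hw]
  calc ∑ j ∈ Finset.range N, ∑ k ∈ Finset.range N, c j * c k / ((j:ℝ) + k + 1)
      ≤ ∑ j ∈ Finset.range N, ∑ k ∈ Finset.range N,
          (c j ^ 2 * (p j / p k) / (2 * ((j:ℝ) + k + 1))
            + c k ^ 2 * (p k / p j) / (2 * ((j:ℝ) + k + 1))) := by
        apply Finset.sum_le_sum; intro j _; apply Finset.sum_le_sum; intro k _; exact key j k
    _ = ∑ j ∈ Finset.range N, ∑ k ∈ Finset.range N,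
          c j ^ 2 * (p j / p k) / ((j:ℝ) + k + 1) := by
        simp only [Finset.sum_add_distrib]
        have hswap : ∑ j ∈ Finset.range N, ∑ k ∈ Finset.range N, c k ^ 2 * (p k / p j) / (2 * ((j:ℝ)+k+1))
            = ∑ j ∈ Finset.range N, ∑ k ∈ Finset.range N, c j ^ 2 * (p j / p k) / (2 * ((j:ℝ)+k+1)) := by
          rw [Finset.sum_comm]
          apply Finset.sum_congr rfl; intro j _; apply Finset.sum_congr rfl; intro k _
          ring_nf
        rw [hswap, ← Finset.sum_add_distrib]
        apply Finset.sum_congr rfl; intro j _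
        rw [← Finset.sum_add_distrib]
        apply Finset.sum_congr rfl; intro k _
        have hw : ((j:ℝ)+k+1) ≠ 0 := by positivity
        have hpk := (hppos k).ne'
        have hpj := (hppos j).ne'
        field_simp
        ring
    _ ≤ ∑ j ∈ Finset.range N, c j ^ 2 * π := by
        apply Finset.sum_le_sum; intro j _
        have : ∑ k ∈ Finset.range N, c j ^ 2 * (p j / p k) / ((j:ℝ) + k + 1)
            = c j ^ 2 * ∑ k ∈ Finset.range N, p j / (p k * ((j:ℝ) + k + 1)) := by
          rw [Finset.mul_sum]
          apply Finset.sum_congr rfl; intro k _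
          field_simp
        rw [this]
        have hK := key_K j N
        have : ∑ k ∈ Finset.range N, p j / (p k * ((j:ℝ) + k + 1)) ≤ π := hK
        nlinarith [sq_nonneg (c j), this]
    _ = π * ∑ k ∈ Finset.range N, c k ^ 2 := by rw [Finset.mul_sum]; apply Finset.sum_congr rfl; intro k _; ring

private lemma hilbert_ennreal (c : ℕ → ℝ) (hc : ∀ k, 0 ≤ c k) :
    ∑' (q : ℕ × ℕ), ENNReal.ofReal (c q.1 * c q.2 / ((q.1:ℝ) + q.2 + 1)) ≤
      ENNReal.ofReal π * ∑' k, ENNReal.ofReal (c k ^ 2) := by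
  rw [ENNReal.tsum_eq_iSup_sum]
  apply iSup_le
  intro s
  set N : ℕ := (s.sup fun q => max q.1 q.2) + 1 with hN
  have hsub : s ⊆ Finset.range N ×ˢ Finset.range N := by
    intro q hq
    rw [Finset.mem_product, Finset.mem_range, Finset.mem_range]
    constructor
    · exact Nat.lt_succ_of_le (le_trans (le_max_left _ _)
        (Finset.le_sup (f := fun q : ℕ × ℕ => max q.1 q.2) hq))
    · exact Nat.lt_succ_of_le (le_trans (le_max_right _ _)
        (Finset.le_sup (f := fun q : ℕ × ℕ => max q.1 q.2) hq))
  calc ∑ q ∈ s, ENNReal.ofReal (c q.1 * c q.2 / ((q.1:ℝ) + q.2 + 1))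
      ≤ ∑ q ∈ Finset.range N ×ˢ Finset.range N,
          ENNReal.ofReal (c q.1 * c q.2 / ((q.1:ℝ) + q.2 + 1)) :=
        Finset.sum_le_sum_of_subset hsub
    _ = ENNReal.ofReal (∑ q ∈ Finset.range N ×ˢ Finset.range N,
          c q.1 * c q.2 / ((q.1:ℝ) + q.2 + 1)) := by
        rw [ENNReal.ofReal_sum_of_nonneg]
        intro q _
        have := hc q.1; have := hc q.2; positivity
    _ ≤ ENNReal.ofReal (π * ∑ k ∈ Finset.range N, c k ^ 2) := by
        apply ENNReal.ofReal_le_ofReal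
        rw [Finset.sum_product]
        exact hilbert_finite c hc N
    _ ≤ ENNReal.ofReal π * ∑' k, ENNReal.ofReal (c k ^ 2) := by
        rw [ENNReal.ofReal_mul Real.pi_nonneg]
        apply mul_le_mul_right ?_ _
        rw [ENNReal.ofReal_sum_of_nonneg (fun k _ => by positivity)]
        exact ENNReal.sum_le_tsum _

private lemma moment (n : ℕ) :
    ∫⁻ r in Set.Ioo (0:ℝ) 1, ENNReal.ofReal r ^ n = ENNReal.ofReal (1/((n:ℝ)+1)) := by
  have h1 : ∀ᵐ r ∂(volume.restrict (Set.Ioo (0:ℝ) 1)),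
      ENNReal.ofReal r ^ n = ENNReal.ofReal (r ^ n) := by
    filter_upwards [ae_restrict_mem measurableSet_Ioo] with r hr
    exact (ENNReal.ofReal_pow hr.1.le n).symm
  rw [lintegral_congr_ae h1]
  have hint : IntegrableOn (fun r : ℝ => r ^ n) (Set.Ioo (0:ℝ) 1) :=
    ((continuous_pow n).integrableOn_Icc).mono_set Set.Ioo_subset_Icc_self
  rw [← MeasureTheory.ofReal_integral_eq_lintegral_ofReal hint]
  · congr 1
    have : ∫ r in Set.Ioo (0:ℝ) 1, r ^ n = ∫ r in (0:ℝ)..1, r ^ n := by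
      rw [intervalIntegral.integral_of_le zero_le_one, MeasureTheory.integral_Ioc_eq_integral_Ioo]
    rw [this, integral_pow]
    push_cast
    norm_num
  · filter_upwards [ae_restrict_mem measurableSet_Ioo] with r hr
    exact pow_nonneg hr.1.le n

end Aux

open MeasureTheory in
private lemma summable_mul_geom {x : ℕ → ℝ} (hx : ∀ k, 0 ≤ x k)
    (hx2 : Summable fun k => x k ^ 2) {r : ℝ} (h0 : 0 ≤ r) (h1 : r < 1) :
    Summable fun k => x k * r ^ k := by
  have hg : Summable fun k : ℕ => (r ^ k) ^ 2 := by
    have h := summable_geometric_of_lt_one (r := r ^ 2) (by positivity) (by nlinarith)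
    exact h.congr fun k => by rw [← pow_mul, ← pow_mul, mul_comm]
  apply Summable.of_nonneg_of_le (fun k => by have := hx k; positivity) (fun k => ?_) (hx2.add hg)
  nlinarith [sq_nonneg (x k - r ^ k), pow_nonneg h0 k, hx k, mul_nonneg (hx k) (pow_nonneg h0 k)]

open MeasureTheory in
/-- Maximal theorem: for `f = h + conj g` with square-summable coefficients,
`∫₀¹ (max_{|z|=r} |f(z)|)² dr ≤ 2π Σ (|a_n|² + |b_n|²)`. -/
theorem stmt10 (a b : ℕ → ℂ)
    (hsum : Summable fun k => ‖a k‖ ^ 2 + ‖b k‖ ^ 2)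
    (f : ℂ → ℂ)
    (hf : ∀ z ∈ ball (0 : ℂ) 1,
      f z = (∑' k : ℕ, a k * z ^ k) + (starRingEnd ℂ) (∑' k : ℕ, b k * z ^ k)) :
    ∫ r in (0 : ℝ)..1, (sSup ((fun z => ‖f z‖) '' sphere (0 : ℂ) r)) ^ 2 ≤
      2 * π * ∑' n : ℕ, (‖a n‖ ^ 2 + ‖b n‖ ^ 2) := by
  classical
  set g : ℝ → ℝ :=
    fun r => (sSup ((fun z => ‖f z‖) '' sphere (0:ℂ) r)) ^ 2 with hgdef
  have hS_nonneg : 0 ≤ ∑' n : ℕ, (‖a n‖ ^ 2 + ‖b n‖ ^ 2) :=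
    tsum_nonneg fun n => by positivity
  have hRHS_nonneg : 0 ≤ 2 * π * ∑' n : ℕ, (‖a n‖ ^ 2 + ‖b n‖ ^ 2) := by
    have := Real.pi_nonneg; nlinarith
  by_cases hInt : IntervalIntegrable g volume 0 1
  swap
  · rw [intervalIntegral.integral_undef hInt]; exact hRHS_nonneg
  -- coefficient sequence
  set c : ℕ → ℝ := fun k => ‖a k‖ + ‖b k‖ with hcdef
  have hc0 : ∀ k, 0 ≤ c k := fun k => by positivity
  have ha2 : Summable fun k => ‖a k‖ ^ 2 :=
    Summable.of_nonneg_of_le (fun k => by positivity)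
      (fun k => le_add_of_nonneg_right (by positivity)) hsum
  have hb2 : Summable fun k => ‖b k‖ ^ 2 :=
    Summable.of_nonneg_of_le (fun k => by positivity)
      (fun k => le_add_of_nonneg_left (by positivity)) hsum
  have hc2 : Summable fun k => c k ^ 2 := by
    apply Summable.of_nonneg_of_le (fun k => by positivity) (fun k => ?_) (hsum.mul_left 2)
    simp only [hcdef]
    nlinarith [sq_nonneg (‖a k‖ - ‖b k‖)]
  -- pointwise sup bound
  have habs : ∀ r : ℝ, r ∈ Set.Ioo (0:ℝ) 1 → ∀ z ∈ sphere (0:ℂ) r,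
      ‖f z‖ ≤ ∑' k, c k * r ^ k := by
    intro r hr z hz
    have hzr : ‖z‖ = r := by
      exact mem_sphere_zero_iff_norm.1 hz
    have hzb : z ∈ ball (0:ℂ) 1 := by
      rw [mem_ball_zero_iff, hzr]; exact hr.2
    have hsa : Summable fun k => ‖a k‖ * r ^ k :=
      summable_mul_geom (fun k => (norm_nonneg _)) ha2 hr.1.le hr.2
    have hsb : Summable fun k => ‖b k‖ * r ^ k :=
      summable_mul_geom (fun k => (norm_nonneg _)) hb2 hr.1.le hr.2
    have hna : Summable fun k => ‖a k * z ^ k‖ :=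
      hsa.congr fun k => by
        rw [norm_mul, norm_pow, hzr]
    have hnb : Summable fun k => ‖b k * z ^ k‖ :=
      hsb.congr fun k => by
        rw [norm_mul, norm_pow, hzr]
    rw [hf z hzb]
    calc ‖(∑' k : ℕ, a k * z ^ k) + (starRingEnd ℂ) (∑' k : ℕ, b k * z ^ k)‖
        ≤ ‖∑' k : ℕ, a k * z ^ k‖
            + ‖(starRingEnd ℂ) (∑' k : ℕ, b k * z ^ k)‖ :=
          norm_add_le _ _
      _ = ‖∑' k : ℕ, a k * z ^ k‖ + ‖∑' k : ℕ, b k * z ^ k‖ := by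
          rw [Complex.norm_conj]
      _ ≤ (∑' k, ‖a k‖ * r ^ k) + (∑' k, ‖b k‖ * r ^ k) := by
          apply add_le_add
          · have h1 := norm_tsum_le_tsum_norm hna
            refine le_trans h1 (le_of_eq (tsum_congr fun k => ?_))
            rw [norm_mul, norm_pow, hzr]
          · have h1 := norm_tsum_le_tsum_norm hnb
            refine le_trans h1 (le_of_eq (tsum_congr fun k => ?_))
            rw [norm_mul, norm_pow, hzr]
      _ = ∑' k, c k * r ^ k := by
          rw [← Summable.tsum_add hsa hsb]
          exact tsum_congr fun k => by rw [hcdef]; ring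
  -- to lintegral
  have hgnn : ∀ r : ℝ, 0 ≤ g r := fun r => sq_nonneg _
  have hIO : IntegrableOn g (Set.Ioo (0:ℝ) 1) volume :=
    hInt.1.mono_set Set.Ioo_subset_Ioc_self
  rw [intervalIntegral.integral_of_le zero_le_one, MeasureTheory.integral_Ioc_eq_integral_Ioo,
    MeasureTheory.integral_eq_lintegral_of_nonneg_ae (Filter.Eventually.of_forall hgnn)
      hIO.aestronglyMeasurable]
  apply ENNReal.toReal_le_of_le_ofReal hRHS_nonneg
  set d : ℕ → ENNReal := fun k => ENNReal.ofReal (c k) with hddef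
  have hmeas : ∀ k : ℕ, Measurable fun r : ℝ => d k * ENNReal.ofReal r ^ k :=
    fun k => (ENNReal.measurable_ofReal.pow_const k).const_mul _
  -- bound by the power series square
  have hb : ∀ᵐ r ∂(volume.restrict (Set.Ioo (0:ℝ) 1)),
      ENNReal.ofReal (g r) ≤ (∑' k, d k * ENNReal.ofReal r ^ k) ^ 2 := by
    filter_upwards [ae_restrict_mem measurableSet_Ioo] with r hr
    have hsc : Summable fun k => c k * r ^ k :=
      summable_mul_geom hc0 hc2 hr.1.le hr.2
    have hF0 : 0 ≤ ∑' k, c k * r ^ k :=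
      tsum_nonneg fun k => mul_nonneg (hc0 k) (pow_nonneg hr.1.le k)
    have hsup0 : 0 ≤ sSup ((fun z => ‖f z‖) '' sphere (0:ℂ) r) := by
      apply Real.sSup_nonneg
      rintro x ⟨z, hz, rfl⟩
      exact norm_nonneg _
    have hsup : sSup ((fun z => ‖f z‖) '' sphere (0:ℂ) r) ≤ ∑' k, c k * r ^ k := by
      apply Real.sSup_le ?_ hF0
      rintro x ⟨z, hz, rfl⟩
      exact habs r hr z hz
    have hgle : g r ≤ (∑' k, c k * r ^ k) ^ 2 := by
      rw [hgdef]
      exact pow_le_pow_left₀ hsup0 hsup 2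
    calc ENNReal.ofReal (g r) ≤ ENNReal.ofReal ((∑' k, c k * r ^ k) ^ 2) :=
          ENNReal.ofReal_le_ofReal hgle
      _ = (∑' k, d k * ENNReal.ofReal r ^ k) ^ 2 := by
          rw [ENNReal.ofReal_pow hF0]
          congr 1
          rw [ENNReal.ofReal_tsum_of_nonneg
            (fun k => mul_nonneg (hc0 k) (pow_nonneg hr.1.le k)) hsc]
          exact tsum_congr fun k => by
            rw [ENNReal.ofReal_mul (hc0 k), ENNReal.ofReal_pow hr.1.le]
  have hcalc : (∫⁻ r in Set.Ioo (0:ℝ) 1, (∑' k, d k * ENNReal.ofReal r ^ k) ^ 2)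
      = ∑' (q : ℕ × ℕ), ENNReal.ofReal (c q.1 * c q.2 / ((q.1:ℝ) + q.2 + 1)) := by
    have e1 : ∀ r : ℝ, (∑' k, d k * ENNReal.ofReal r ^ k) ^ 2
        = ∑' (j : ℕ), ∑' (k : ℕ), (d j * ENNReal.ofReal r ^ j) * (d k * ENNReal.ofReal r ^ k) := by
      intro r
      rw [pow_two, ← ENNReal.tsum_mul_right]
      exact tsum_congr fun j => (ENNReal.tsum_mul_left).symm
    calc (∫⁻ r in Set.Ioo (0:ℝ) 1, (∑' k, d k * ENNReal.ofReal r ^ k) ^ 2)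
        = ∫⁻ r in Set.Ioo (0:ℝ) 1, ∑' (j : ℕ), ∑' (k : ℕ),
            (d j * ENNReal.ofReal r ^ j) * (d k * ENNReal.ofReal r ^ k) :=
          lintegral_congr fun r => e1 r
      _ = ∑' (j : ℕ), ∫⁻ r in Set.Ioo (0:ℝ) 1, ∑' (k : ℕ),
            (d j * ENNReal.ofReal r ^ j) * (d k * ENNReal.ofReal r ^ k) :=
          lintegral_tsum fun j =>
            (Measurable.ennreal_tsum fun k => (hmeas j).mul (hmeas k)).aemeasurable
      _ = ∑' (j : ℕ), ∑' (k : ℕ), ∫⁻ r in Set.Ioo (0:ℝ) 1,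
            (d j * ENNReal.ofReal r ^ j) * (d k * ENNReal.ofReal r ^ k) :=
          tsum_congr fun j => lintegral_tsum fun k => ((hmeas j).mul (hmeas k)).aemeasurable
      _ = ∑' (j : ℕ), ∑' (k : ℕ), ENNReal.ofReal (c j * c k / ((j:ℝ) + k + 1)) := by
          apply tsum_congr; intro j; apply tsum_congr; intro k
          have e2 : ∀ r : ℝ, (d j * ENNReal.ofReal r ^ j) * (d k * ENNReal.ofReal r ^ k)
              = (d j * d k) * ENNReal.ofReal r ^ (j + k) := fun r => by rw [pow_add]; ring
          rw [lintegral_congr fun r => e2 r,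
            lintegral_const_mul' _ _ (ENNReal.mul_ne_top ENNReal.ofReal_ne_top ENNReal.ofReal_ne_top),
            moment (j + k)]
          rw [← ENNReal.ofReal_mul (hc0 j), ← ENNReal.ofReal_mul (mul_nonneg (hc0 j) (hc0 k))]
          congr 1
          push_cast
          rw [mul_one_div]
      _ = ∑' (q : ℕ × ℕ), ENNReal.ofReal (c q.1 * c q.2 / ((q.1:ℝ) + q.2 + 1)) :=
          (ENNReal.tsum_prod).symm
  calc ∫⁻ r in Set.Ioo (0:ℝ) 1, ENNReal.ofReal (g r)
      ≤ ∫⁻ r in Set.Ioo (0:ℝ) 1, (∑' k, d k * ENNReal.ofReal r ^ k) ^ 2 :=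
        lintegral_mono_ae hb
    _ = ∑' (q : ℕ × ℕ), ENNReal.ofReal (c q.1 * c q.2 / ((q.1:ℝ) + q.2 + 1)) := hcalc
    _ ≤ ENNReal.ofReal π * ∑' k, ENNReal.ofReal (c k ^ 2) := hilbert_ennreal c hc0
    _ ≤ ENNReal.ofReal (2 * π * ∑' n : ℕ, (‖a n‖ ^ 2 + ‖b n‖ ^ 2)) := by
        rw [← ENNReal.ofReal_tsum_of_nonneg (fun k => sq_nonneg _) hc2,
          ← ENNReal.ofReal_mul Real.pi_nonneg]
        apply ENNReal.ofReal_le_ofReal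
        have h2S : ∑' k, c k ^ 2
            ≤ 2 * ∑' n : ℕ, (‖a n‖ ^ 2 + ‖b n‖ ^ 2) := by
          rw [← tsum_mul_left]
          apply Summable.tsum_le_tsum (fun k => ?_) hc2 (hsum.mul_left 2)
          simp only [hcdef]
          nlinarith [sq_nonneg (‖a k‖ - ‖b k‖)]
        nlinarith [Real.pi_nonneg, h2S, (tsum_nonneg (fun k => sq_nonneg (c k)) : 0 ≤ ∑' k, c k ^ 2), hS_nonneg]
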